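/- Fix integers 0 ≤ j < i ≤ n. The set {x ∈ ℝⁿ : ∇(h_i²)(x) = ∇(h_j²)(x)} equals the union {x : h_{i,j}(x) = 0} ∪ ⋃_{k=0}^{j−1} {x : h_{i,k}(x) = 0 and h_{j,k}(x) = 0}. Moreover at every point of this set one has h_i(x) = h_j(x), so the tangency locus of the graphs ⁿΓ_i = {x_0 = h_i(x)²} and ⁿΓ_j = {x_0 = h_j(x)²} in ℝ^{n+1} (the set of points of ⁿΓ_i ∩ ⁿΓ_j where the two graphs have the same tangent hyperplane) is exactly the part of the graph ⁿΓ_i (equivalently of ⁿΓ_j) lying over this union. -/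

import Mathlib

open scoped ContDiff

noncomputable section

/-- The polynomial `h_i` in the variables `x_1, …, x_i` (0-indexed: it depends on
coordinates `0, …, i-1`): `h_0 = 0`, `h_{i+1}(x) = x 0 - (h_i (x ∘ (·+1)))^2`. -/
def hpoly : ℕ → (ℕ → ℝ) → ℝ
  | 0, _ => 0
  | i + 1, x => x 0 - (hpoly i fun k => x (k + 1)) ^ 2

/-- Extension of a vector of `ℝⁿ` by zeros to an infinite sequence. -/
def extv {n : ℕ} (x : Fin n → ℝ) : ℕ → ℝ := fun k => if h : k < n then x ⟨k, h⟩ else 0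

/-- `h_{i,j}` as a function on `ℝⁿ` (0-indexed: it depends on coordinates `j, …, i-1`;
in the paper's notation `h_{i,j}(x) = h_{i-j}(x_{j+1}, …, x_i)`). -/
def hh (n i j : ℕ) (x : Fin n → ℝ) : ℝ := hpoly (i - j) fun k => extv x (j + k)

/-- The gradient of a function on `ℝⁿ`, via the Fréchet derivative. -/
def grad {n : ℕ} (f : (Fin n → ℝ) → ℝ) (x : Fin n → ℝ) : Fin n → ℝ :=
  fun k => fderiv ℝ f x (Pi.single k 1)

/-- The `m`-th standard basis vector of `ℝⁿ` (zero if `m ≥ n`). -/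
def evec (n m : ℕ) : Fin n → ℝ := fun k => if (k : ℕ) = m then 1 else 0

lemma hh_of_le (n i l : ℕ) (h : i ≤ l) (x : Fin n → ℝ) : hh n i l x = 0 := by
  simp [hh, Nat.sub_eq_zero_of_le h, hpoly]

lemma hh_succ_eq (n i l : ℕ) (hl : l < i) (hin : i ≤ n) (x : Fin n → ℝ) :
    hh n i l x = x ⟨l, lt_of_lt_of_le hl hin⟩ - (hh n i (l + 1) x) ^ 2 := by
  have h1 : i - l = (i - (l + 1)) + 1 := by omega
  have h2 : (fun k => extv x ((l + 1) + k)) = fun k => extv x (l + (k + 1)) := by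
    funext k; congr 1; omega
  unfold hh
  rw [h1, h2]
  simp only [hpoly]
  have : extv x (l + 0) = x ⟨l, lt_of_lt_of_le hl hin⟩ := by
    simp [extv, lt_of_lt_of_le hl hin]
  rw [this]

lemma hh_diff (n i : ℕ) (hin : i ≤ n) :
    ∀ (d l : ℕ), i - l ≤ d → ∀ x, DifferentiableAt ℝ (hh n i l) x := by
  intro d
  induction d with
  | zero =>
    intro l hl x
    have h : i ≤ l := by omega
    have : hh n i l = fun _ => (0 : ℝ) := funext fun y => hh_of_le n i l h y
    rw [this]; exact differentiableAt_const 0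
  | succ d ih =>
    intro l hl x
    by_cases h : l < i
    · have heq : hh n i l = fun y => y ⟨l, lt_of_lt_of_le h hin⟩ - (hh n i (l + 1) y) ^ 2 :=
        funext fun y => hh_succ_eq n i l h hin y
      rw [heq]
      exact ((ContinuousLinearMap.proj (R := ℝ) (φ := fun _ : Fin n => ℝ)
        ⟨l, lt_of_lt_of_le h hin⟩).differentiableAt).sub ((ih (l + 1) (by omega) x).pow 2)
    · have h' : i ≤ l := by omega
      have : hh n i l = fun _ => (0 : ℝ) := funext fun y => hh_of_le n i l h' y
      rw [this]; exact differentiableAt_const 0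

lemma fderiv_hh_apply (n i l : ℕ) (hl : l < i) (hin : i ≤ n) (x v : Fin n → ℝ) :
    fderiv ℝ (hh n i l) x v
      = v ⟨l, lt_of_lt_of_le hl hin⟩ - 2 * hh n i (l + 1) x * fderiv ℝ (hh n i (l + 1)) x v := by
  have hd : DifferentiableAt ℝ (hh n i (l + 1)) x := hh_diff n i hin (i - (l+1)) (l + 1) le_rfl x
  have heq : hh n i l = fun y =>
      (ContinuousLinearMap.proj (R := ℝ) (φ := fun _ : Fin n => ℝ) ⟨l, lt_of_lt_of_le hl hin⟩) y
        - hh n i (l + 1) y * hh n i (l + 1) y := by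
    funext y
    have := hh_succ_eq n i l hl hin y
    simpa [pow_two] using this
  rw [heq, fderiv_fun_sub (ContinuousLinearMap.differentiableAt _) (hd.fun_mul hd), fderiv_fun_mul hd hd]
  simp [ContinuousLinearMap.fderiv]
  ring
lemma fderiv_hh_zero (n i : ℕ) (hin : i ≤ n) :
    ∀ (d l : ℕ) (m : Fin n), i - l ≤ d → ((m : ℕ) < l ∨ i ≤ (m : ℕ)) → ∀ x,
      fderiv ℝ (hh n i l) x (Pi.single m 1) = 0 := by
  intro d
  induction d with
  | zero =>
    intro l m hl _ x
    have h : i ≤ l := by omega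
    have : hh n i l = fun _ => (0 : ℝ) := funext fun y => hh_of_le n i l h y
    rw [this, fderiv_fun_const]
    simp
  | succ d ih =>
    intro l m hl hm x
    by_cases h : l < i
    · rw [fderiv_hh_apply n i l h hin x]
      have hne : (⟨l, lt_of_lt_of_le h hin⟩ : Fin n) ≠ m := by
        intro he
        have : (m : ℕ) = l := by rw [← he]
        omega
      rw [Pi.single_eq_of_ne hne, ih (l + 1) m (by omega) (by omega) x]
      ring
    · have h' : i ≤ l := by omega
      have : hh n i l = fun _ => (0 : ℝ) := funext fun y => hh_of_le n i l h' y
      rw [this, fderiv_fun_const]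
      simp

lemma fderiv_hh_prod (n i : ℕ) (hin : i ≤ n) :
    ∀ (d l : ℕ) (m : Fin n), (m : ℕ) = l + d → (m : ℕ) < i → ∀ x,
      fderiv ℝ (hh n i l) x (Pi.single m 1)
        = ∏ t ∈ Finset.Ico (l + 1) ((m : ℕ) + 1), (-2 * hh n i t x) := by
  intro d
  induction d with
  | zero =>
    intro l m hm hmi x
    have hl : l < i := by omega
    rw [fderiv_hh_apply n i l hl hin x]
    have he : (⟨l, lt_of_lt_of_le hl hin⟩ : Fin n) = m := by
      apply Fin.ext; simp; omega
    rw [he, Pi.single_eq_same,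
      fderiv_hh_zero n i hin (i - (l + 1)) (l + 1) m le_rfl (by omega) x]
    rw [hm]
    simp
  | succ d ih =>
    intro l m hm hmi x
    have hl : l < i := by omega
    rw [fderiv_hh_apply n i l hl hin x]
    have hne : (⟨l, lt_of_lt_of_le hl hin⟩ : Fin n) ≠ m := by
      intro he
      have : (m : ℕ) = l := by rw [← he]
      omega
    rw [Pi.single_eq_of_ne hne, ih (l + 1) m (by omega) hmi x]
    rw [Finset.prod_eq_prod_Ico_succ_bot (by omega : l + 1 < (m : ℕ) + 1)]
    ring

lemma fderiv_sq_apply (n i : ℕ) (hin : i ≤ n) (x v : Fin n → ℝ) :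
    fderiv ℝ (fun y => (hh n i 0 y) ^ 2) x v = 2 * hh n i 0 x * fderiv ℝ (hh n i 0) x v := by
  have hd : DifferentiableAt ℝ (hh n i 0) x := hh_diff n i hin i 0 (by omega) x
  have heq : (fun y => (hh n i 0 y) ^ 2) = fun y => hh n i 0 y * hh n i 0 y := by
    funext y; ring
  rw [heq, fderiv_fun_mul hd hd]
  simp
  ring

lemma grad_sq (n i : ℕ) (hin : i ≤ n) (x : Fin n → ℝ) (m : Fin n) :
    grad (fun y => (hh n i 0 y) ^ 2) x m
      = 2 * (-2) ^ (m : ℕ) * ∏ l ∈ Finset.range ((m : ℕ) + 1), hh n i l x := by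
  rw [grad, fderiv_sq_apply n i hin x]
  by_cases hmi : (m : ℕ) < i
  · rw [fderiv_hh_prod n i hin (m : ℕ) 0 m (by omega) hmi x]
    have h1 : ∏ t ∈ Finset.Ico (0 + 1) ((m : ℕ) + 1), (-2 * hh n i t x)
        = (-2) ^ (m : ℕ) * ∏ t ∈ Finset.Ico 1 ((m : ℕ) + 1), hh n i t x := by
      rw [Finset.prod_mul_distrib, Finset.prod_const, Nat.card_Ico]
      norm_num
    have h2 : ∏ l ∈ Finset.range ((m : ℕ) + 1), hh n i l x
        = hh n i 0 x * ∏ t ∈ Finset.Ico 1 ((m : ℕ) + 1), hh n i t x := by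
      rw [Finset.range_eq_Ico, Finset.prod_eq_prod_Ico_succ_bot (by omega : 0 < (m : ℕ) + 1)]
    rw [h1, h2]
    ring
  · rw [fderiv_hh_zero n i hin i 0 m (by omega) (by omega) x]
    have : ∏ l ∈ Finset.range ((m : ℕ) + 1), hh n i l x = 0 :=
      Finset.prod_eq_zero (Finset.mem_range.2 (by omega)) (hh_of_le n i i le_rfl x)
    rw [this]
    ring
lemma hh_eq_of_eq (n i j k : ℕ) (hk : k ≤ j) (hji : j < i) (hin : i ≤ n) (x : Fin n → ℝ)
    (h : hh n i k x = hh n j k x) : ∀ l ≤ k, hh n i l x = hh n j l x := by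
  have key : ∀ d, hh n i (k - d) x = hh n j (k - d) x := by
    intro d
    induction d with
    | zero => simpa using h
    | succ d ih =>
      by_cases hd : d < k
      · have h1 : k - (d + 1) < j := by omega
        have h2 : k - (d + 1) < i := by omega
        have e : (k - (d + 1)) + 1 = k - d := by omega
        rw [hh_succ_eq n i _ h2 hin, hh_succ_eq n j _ h1 (le_trans (le_of_lt hji) hin), e, ih]
      · have e : k - (d + 1) = k - d := by omega
        rw [e, ih]
  intro l hl
  have := key (k - l)
  rwa [show k - (k - l) = l by omega] at this

lemma prods_eq_of_zero (n i j k : ℕ) (hk : k ≤ j) (hji : j < i) (hin : i ≤ n) (x : Fin n → ℝ)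
    (hik : hh n i k x = 0) (hjk : hh n j k x = 0) :
    ∀ m : ℕ, (∏ l ∈ Finset.range (m + 1), hh n i l x) = ∏ l ∈ Finset.range (m + 1), hh n j l x := by
  have heq : ∀ l ≤ k, hh n i l x = hh n j l x :=
    hh_eq_of_eq n i j k hk hji hin x (by rw [hik, hjk])
  intro m
  by_cases hm : m < k
  · exact Finset.prod_congr rfl fun l hl => heq l (by have := Finset.mem_range.1 hl; omega)  -- need l ≤ k
  · rw [Finset.prod_eq_zero (Finset.mem_range.2 (by omega)) hik,
      Finset.prod_eq_zero (Finset.mem_range.2 (by omega)) hjk]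

lemma zero_of_prods (n i j : ℕ) (hji : j < i) (hin : i ≤ n) (x : Fin n → ℝ)
    (hQ : ∀ m : ℕ, m < n →
      (∏ l ∈ Finset.range (m + 1), hh n i l x) = ∏ l ∈ Finset.range (m + 1), hh n j l x) :
    hh n i j x = 0 ∨ ∃ k, k < j ∧ hh n i k x = 0 ∧ hh n j k x = 0 := by
  -- helper: from minimality of zeros of hh j, get hh i k = 0
  have helper : ∀ k ≤ j, hh n j k x = 0 → (∀ l, l < k → hh n j l x ≠ 0) →
      hh n i k x = 0 := by
    intro k hkj hjk hmin
    have hQk : (∏ l ∈ Finset.range (k + 1), hh n i l x) = ∏ l ∈ Finset.range (k + 1), hh n j l x :=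
      hQ k (by omega)
    have hQk0 : (∏ l ∈ Finset.range (k + 1), hh n i l x) = 0 := by
      rw [hQk]
      exact Finset.prod_eq_zero (Finset.mem_range.2 (by omega)) hjk
    obtain ⟨l, hl, hl0⟩ := Finset.prod_eq_zero_iff.1 hQk0
    have hlk : l ≤ k := by have := Finset.mem_range.1 hl; omega
    rcases eq_or_lt_of_le hlk with rfl | hlt
    · exact hl0
    · exfalso
      have h1 : (∏ t ∈ Finset.range (l + 1), hh n i t x) = 0 :=
        Finset.prod_eq_zero (Finset.mem_range.2 (by omega)) hl0
      have h2 : (∏ t ∈ Finset.range (l + 1), hh n j t x) ≠ 0 :=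
        Finset.prod_ne_zero_iff.2 fun t ht => hmin t (by have := Finset.mem_range.1 ht; omega)
      exact h2 (by rw [← hQ l (by omega), h1])
  by_cases hex : ∃ l, l < j ∧ hh n j l x = 0
  · right
    have hk := Nat.find_spec hex
    refine ⟨Nat.find hex, hk.1, ?_, hk.2⟩
    exact helper _ (le_of_lt hk.1) hk.2 fun l hl => by
      have := Nat.find_min hex hl
      intro h0
      exact this ⟨by omega, h0⟩
  · left
    push_neg at hex
    exact helper j le_rfl (hh_of_le n j j le_rfl x) fun l hl => hex l hl
/-- Fix `0 ≤ j < i ≤ n`.  The set `{x : ∇(h_i²)(x) = ∇(h_j²)(x)}` equals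
`{h_{i,j} = 0} ∪ ⋃_{k<j} {h_{i,k} = h_{j,k} = 0}`; at every point of this set `h_i(x) = h_j(x)`;
and the tangency locus of the graphs `ⁿΓ_i = {x_0 = h_i²}` and `ⁿΓ_j = {x_0 = h_j²}` (common
points with equal gradients) is exactly the part of `ⁿΓ_i` lying over this union. -/
theorem stmt_7 (n i j : ℕ) (hji : j < i) (hin : i ≤ n) :
    ({x : Fin n → ℝ |
        grad (fun y => (hh n i 0 y) ^ 2) x = grad (fun y => (hh n j 0 y) ^ 2) x}
      = {x : Fin n → ℝ | hh n i j x = 0} ∪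
          ⋃ k ∈ Finset.range j, {x : Fin n → ℝ | hh n i k x = 0 ∧ hh n j k x = 0}) ∧
    (∀ x : Fin n → ℝ,
      x ∈ ({x : Fin n → ℝ | hh n i j x = 0} ∪
          ⋃ k ∈ Finset.range j, {x : Fin n → ℝ | hh n i k x = 0 ∧ hh n j k x = 0}) →
      hh n i 0 x = hh n j 0 x) ∧
    ({z : ℝ × (Fin n → ℝ) |
        z.1 = (hh n i 0 z.2) ^ 2 ∧ z.1 = (hh n j 0 z.2) ^ 2 ∧
        grad (fun y => (hh n i 0 y) ^ 2) z.2 = grad (fun y => (hh n j 0 y) ^ 2) z.2}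
      = {z : ℝ × (Fin n → ℝ) |
          z.1 = (hh n i 0 z.2) ^ 2 ∧
          z.2 ∈ ({x : Fin n → ℝ | hh n i j x = 0} ∪
            ⋃ k ∈ Finset.range j, {x : Fin n → ℝ | hh n i k x = 0 ∧ hh n j k x = 0})}) := by
  have hjn : j ≤ n := le_trans (le_of_lt hji) hin
  have memU : ∀ x : Fin n → ℝ,
      (x ∈ ({x : Fin n → ℝ | hh n i j x = 0} ∪
          ⋃ k ∈ Finset.range j, {x : Fin n → ℝ | hh n i k x = 0 ∧ hh n j k x = 0}))
      ↔ (hh n i j x = 0 ∨ ∃ k, k < j ∧ hh n i k x = 0 ∧ hh n j k x = 0) := by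
    intro x
    simp only [Set.mem_union, Set.mem_setOf_eq, Set.mem_iUnion, Finset.mem_range, exists_prop]
  have gradIff : ∀ x : Fin n → ℝ,
      (grad (fun y => (hh n i 0 y) ^ 2) x = grad (fun y => (hh n j 0 y) ^ 2) x)
      ↔ ∀ m : ℕ, m < n →
          (∏ l ∈ Finset.range (m + 1), hh n i l x) = ∏ l ∈ Finset.range (m + 1), hh n j l x := by
    intro x
    rw [funext_iff]
    constructor
    · intro h m hm
      have h2 := h ⟨m, hm⟩
      rw [grad_sq n i hin, grad_sq n j hjn] at h2
      have hne : (2 : ℝ) * (-2) ^ m ≠ 0 :=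
        mul_ne_zero two_ne_zero (pow_ne_zero m (by norm_num))
      exact mul_left_cancel₀ hne h2
    · intro h m
      rw [grad_sq n i hin, grad_sq n j hjn, h (m : ℕ) m.isLt]
  have keyIff : ∀ x : Fin n → ℝ,
      (grad (fun y => (hh n i 0 y) ^ 2) x = grad (fun y => (hh n j 0 y) ^ 2) x)
      ↔ (x ∈ ({x : Fin n → ℝ | hh n i j x = 0} ∪
          ⋃ k ∈ Finset.range j, {x : Fin n → ℝ | hh n i k x = 0 ∧ hh n j k x = 0})) := by
    intro x
    rw [gradIff x, memU x]
    constructor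
    · intro h
      exact zero_of_prods n i j hji hin x h
    · rintro (h | ⟨k, hk, hik, hjk⟩)
      · intro m _
        exact prods_eq_of_zero n i j j le_rfl hji hin x h (hh_of_le n j j le_rfl x) m
      · intro m _
        exact prods_eq_of_zero n i j k (le_of_lt hk) hji hin x hik hjk m
  have part2 : ∀ x : Fin n → ℝ,
      x ∈ ({x : Fin n → ℝ | hh n i j x = 0} ∪
          ⋃ k ∈ Finset.range j, {x : Fin n → ℝ | hh n i k x = 0 ∧ hh n j k x = 0}) →
      hh n i 0 x = hh n j 0 x := by
    intro x hx
    rcases (memU x).1 hx with h | ⟨k, hk, hik, hjk⟩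
    · exact hh_eq_of_eq n i j j le_rfl hji hin x
        (by rw [h, hh_of_le n j j le_rfl x]) 0 (Nat.zero_le j)
    · exact hh_eq_of_eq n i j k (le_of_lt hk) hji hin x (by rw [hik, hjk]) 0 (Nat.zero_le k)
  refine ⟨?_, part2, ?_⟩
  · ext x
    exact keyIff x
  · ext z
    simp only [Set.mem_setOf_eq]
    constructor
    · rintro ⟨h1, _, h3⟩
      exact ⟨h1, (keyIff z.2).1 h3⟩
    · rintro ⟨h1, h2⟩
      exact ⟨h1, by rw [h1, part2 z.2 h2], (keyIff z.2).2 h2⟩
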